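/- If f : X → Y is a surjective coarse map between metric spaces and X satisfies condition (C), then Y satisfies condition (C). -/

import Mathlib

open Bornology

def Bornologous {X Y : Type*} [PseudoMetricSpace X] [PseudoMetricSpace Y] (f : X → Y) : Prop :=
  ∀ R : ℝ, 0 < R → ∃ S : ℝ, 0 < S ∧ ∀ x x' : X, dist x x' ≤ R → dist (f x) (f x') ≤ S

def ProperMap {X Y : Type*} [PseudoMetricSpace X] [PseudoMetricSpace Y] (f : X → Y) : Prop :=
  ∀ B : Set Y, IsBounded B → IsBounded (f ⁻¹' B)

def IsCoarse {X Y : Type*} [PseudoMetricSpace X] [PseudoMetricSpace Y] (f : X → Y) : Prop :=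
  Bornologous f ∧ ProperMap f

def Close {X Y : Type*} [PseudoMetricSpace Y] (f g : X → Y) : Prop :=
  ∃ R : ℝ, 0 < R ∧ ∀ x : X, dist (f x) (g x) ≤ R

def coprodDist {X Y : Type*} [MetricSpace X] [MetricSpace Y] (x₀ : X) (y₀ : Y) :
    X ⊕ Y → X ⊕ Y → ℝ
  | Sum.inl a, Sum.inl b => dist a b
  | Sum.inl a, Sum.inr b => dist a x₀ + 1 + dist y₀ b
  | Sum.inr a, Sum.inl b => dist b x₀ + 1 + dist y₀ a
  | Sum.inr a, Sum.inr b => dist a b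

noncomputable def coprodMetric {X Y : Type*} [MetricSpace X] [MetricSpace Y]
    (x₀ : X) (y₀ : Y) : MetricSpace (X ⊕ Y) where
  dist := coprodDist x₀ y₀
  dist_self := by rintro (a | a) <;> simp [coprodDist]
  dist_comm := fun p q => by
    match p, q with
    | Sum.inl a, Sum.inl b => exact dist_comm a b
    | Sum.inl a, Sum.inr b => rfl
    | Sum.inr a, Sum.inl b => rfl
    | Sum.inr a, Sum.inr b => exact dist_comm a b
  dist_triangle := fun p q r => by
    match p, q, r with
    | Sum.inl a, Sum.inl b, Sum.inl c => exact dist_triangle a b c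
    | Sum.inl a, Sum.inl b, Sum.inr c =>
      show dist a x₀ + 1 + dist y₀ c ≤ dist a b + (dist b x₀ + 1 + dist y₀ c)
      have := dist_triangle a b x₀; linarith
    | Sum.inl a, Sum.inr b, Sum.inl c =>
      show dist a c ≤ (dist a x₀ + 1 + dist y₀ b) + (dist c x₀ + 1 + dist y₀ b)
      have h1 := dist_triangle a x₀ c
      have h2 : dist x₀ c = dist c x₀ := dist_comm _ _
      have h3 := dist_nonneg (x := y₀) (y := b)
      linarith
    | Sum.inl a, Sum.inr b, Sum.inr c =>
      show dist a x₀ + 1 + dist y₀ c ≤ (dist a x₀ + 1 + dist y₀ b) + dist b c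
      have := dist_triangle y₀ b c; linarith
    | Sum.inr a, Sum.inl b, Sum.inl c =>
      show dist c x₀ + 1 + dist y₀ a ≤ (dist b x₀ + 1 + dist y₀ a) + dist b c
      have h1 := dist_triangle c b x₀
      have h2 : dist c b = dist b c := dist_comm _ _
      linarith
    | Sum.inr a, Sum.inl b, Sum.inr c =>
      show dist a c ≤ (dist b x₀ + 1 + dist y₀ a) + (dist b x₀ + 1 + dist y₀ c)
      have h1 := dist_triangle a y₀ c
      have h2 : dist a y₀ = dist y₀ a := dist_comm _ _
      have h3 := dist_nonneg (x := b) (y := x₀)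
      linarith
    | Sum.inr a, Sum.inr b, Sum.inl c =>
      show dist c x₀ + 1 + dist y₀ a ≤ dist a b + (dist c x₀ + 1 + dist y₀ b)
      have h1 := dist_triangle y₀ b a
      have h2 : dist b a = dist a b := dist_comm _ _
      linarith
    | Sum.inr a, Sum.inr b, Sum.inr c => exact dist_triangle a b c
  eq_of_dist_eq_zero := fun {p q} h => by
    match p, q, h with
    | Sum.inl a, Sum.inl b, h => exact congrArg Sum.inl (eq_of_dist_eq_zero h)
    | Sum.inl a, Sum.inr b, h =>
      exfalso
      have h1 := dist_nonneg (x := a) (y := x₀)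
      have h2 := dist_nonneg (x := y₀) (y := b)
      have h' : dist a x₀ + 1 + dist y₀ b = 0 := h
      linarith
    | Sum.inr a, Sum.inl b, h =>
      exfalso
      have h1 := dist_nonneg (x := b) (y := x₀)
      have h2 := dist_nonneg (x := y₀) (y := a)
      have h' : dist b x₀ + 1 + dist y₀ a = 0 := h
      linarith
    | Sum.inr a, Sum.inr b, h => exact congrArg Sum.inr (eq_of_dist_eq_zero h)

/-- Condition (C): every coarse map into a coarse coproduct factors, up to closeness,
through one of the coproduct injections. -/
def CondC (X : Type u) [MetricSpace X] : Prop :=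
  ∀ (Y Z : Type u) [MetricSpace Y] [MetricSpace Z] (y₀ : Y) (z₀ : Z) (f : X → Y ⊕ Z),
    letI := coprodMetric y₀ z₀
    IsCoarse f →
      (∃ g : X → Y, IsCoarse g ∧ Close (Sum.inl ∘ g) f) ∨
      (∃ h : X → Z, IsCoarse h ∧ Close (Sum.inr ∘ h) f)

open Classical in
noncomputable def pullMetric {α M : Type*} [MetricSpace M] (u : α → M) : MetricSpace α where
  dist a b := dist (u a) (u b) + (if a = b then 0 else 1)
  dist_self a := by simp
  dist_comm a b := by
    simp only [dist_comm (u a) (u b)]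
    by_cases h : a = b <;> simp [h, eq_comm]
  dist_triangle a b c := by
    have := dist_triangle (u a) (u b) (u c)
    by_cases hab : a = b <;> by_cases hbc : b = c <;> by_cases hac : a = c <;>
      simp_all <;> linarith [dist_nonneg (x := u a) (y := u b), dist_nonneg (x := u b) (y := u c)]
  eq_of_dist_eq_zero := by
    intro a b h
    by_cases hab : a = b
    · exact hab
    · exfalso
      have h1 := dist_nonneg (x := u a) (y := u b)
      simp only [if_neg hab] at h
      linarith

open Classical in
theorem pullMetric_dist_le {α M : Type*} [MetricSpace M] (u : α → M) (a b : α) :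
    letI := pullMetric u
    dist a b ≤ dist (u a) (u b) + 1 := by
  show dist (u a) (u b) + (if a = b then 0 else 1) ≤ _
  split <;> simp

open Classical in
theorem pullMetric_le_dist {α M : Type*} [MetricSpace M] (u : α → M) (a b : α) :
    letI := pullMetric u
    dist (u a) (u b) ≤ dist a b := by
  show _ ≤ dist (u a) (u b) + (if a = b then 0 else 1)
  split <;> simp

theorem coprod_dist_inl_inl {W Z : Type*} [MetricSpace W] [MetricSpace Z] (w₀ : W) (z₀ : Z)
    (a b : W) : letI := coprodMetric w₀ z₀
    dist (Sum.inl a : W ⊕ Z) (Sum.inl b) = dist a b := rfl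

theorem coprod_dist_inl_inr {W Z : Type*} [MetricSpace W] [MetricSpace Z] (w₀ : W) (z₀ : Z)
    (a : W) (b : Z) : letI := coprodMetric w₀ z₀
    dist (Sum.inl a : W ⊕ Z) (Sum.inr b) = dist a w₀ + 1 + dist z₀ b := rfl

theorem coprod_dist_inr_inl {W Z : Type*} [MetricSpace W] [MetricSpace Z] (w₀ : W) (z₀ : Z)
    (a : Z) (b : W) : letI := coprodMetric w₀ z₀
    dist (Sum.inr a : W ⊕ Z) (Sum.inl b) = dist b w₀ + 1 + dist z₀ a := rfl

theorem coprod_dist_inr_inr {W Z : Type*} [MetricSpace W] [MetricSpace Z] (w₀ : W) (z₀ : Z)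
    (a b : Z) : letI := coprodMetric w₀ z₀
    dist (Sum.inr a : W ⊕ Z) (Sum.inr b) = dist a b := rfl

theorem isCoarse_comp {X Y Z : Type*} [PseudoMetricSpace X] [PseudoMetricSpace Y]
    [PseudoMetricSpace Z] {f : X → Y} {g : Y → Z} (hf : IsCoarse f) (hg : IsCoarse g) :
    IsCoarse (g ∘ f) := by
  constructor
  · intro R hR
    obtain ⟨S, hS, hS2⟩ := hf.1 R hR
    obtain ⟨T, hT, hT2⟩ := hg.1 S hS
    exact ⟨T, hT, fun x x' h => hT2 _ _ (hS2 x x' h)⟩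
  · intro B hB
    exact hf.2 _ (hg.2 B hB)
theorem left_recon {Y W Z : Type*} [MetricSpace Y] [MetricSpace W] [MetricSpace Z]
    (w₀ w₁ : W) (z₀ : Z) (G : Y → W ⊕ Z)
    (hG : letI := coprodMetric w₀ z₀; IsCoarse G)
    (hbd : IsBounded {z : Z | Sum.inr z ∈ Set.range G}) :
    ∃ h : Y → W, IsCoarse h ∧ (letI := coprodMetric w₀ z₀; Close (Sum.inl ∘ h) G) := by
  letI := coprodMetric w₀ z₀
  obtain ⟨r, hr⟩ := (Metric.isBounded_iff_subset_closedBall z₀).mp hbd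
  set r' := max r 0 with hr'def
  have hr'0 : 0 ≤ r' := le_max_right _ _
  set h : Y → W := fun y => Sum.elim id (fun _ => w₁) (G y) with hdef
  have hmemz : ∀ {y z}, G y = Sum.inr z → dist z₀ z ≤ r' := by
    intro y z hy
    have : z ∈ Metric.closedBall z₀ r := hr ⟨y, hy⟩
    rw [Metric.mem_closedBall] at this
    rw [dist_comm]
    exact this.trans (le_max_left _ _)
  refine ⟨h, ⟨?_, ?_⟩, ?_⟩
  · -- bornologous
    intro R hR
    obtain ⟨S, hS, hS2⟩ := hG.1 R hR
    refine ⟨S + dist w₀ w₁ + 1, by positivity, fun y y' hyy => ?_⟩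
    have hd := hS2 y y' hyy
    rcases hy : G y with w | z <;> rcases hy' : G y' with w' | z' <;>
      simp only [hdef, hy, hy', Sum.elim_inl, Sum.elim_inr, id]
    · rw [hy, hy', coprod_dist_inl_inl] at hd
      have := dist_nonneg (x := w₀) (y := w₁); linarith
    · rw [hy, hy', coprod_dist_inl_inr] at hd
      have h1 := dist_triangle w w₀ w₁
      have h2 := dist_nonneg (x := z₀) (y := z')
      linarith
    · rw [hy, hy', coprod_dist_inr_inl] at hd
      have h1 := dist_triangle w₁ w₀ w'
      have h2 : dist w₁ w₀ = dist w₀ w₁ := dist_comm _ _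
      have h3 : dist w₀ w' = dist w' w₀ := dist_comm _ _
      have h4 := dist_nonneg (x := z₀) (y := z)
      linarith
    · simp; positivity
  · -- proper
    intro B hB
    have hsub : h ⁻¹' B ⊆ G ⁻¹' (Sum.inl '' B ∪ Sum.inr '' (Metric.closedBall z₀ r')) := by
      intro y hy
      rcases hgy : G y with w | z
      · left
        refine ⟨w, ?_, hgy.symm⟩
        simpa [hdef, hgy] using hy
      · right
        exact ⟨z, by rw [Metric.mem_closedBall, dist_comm]; exact hmemz hgy, hgy.symm⟩
    have hBl : IsBounded (Sum.inl '' B : Set (W ⊕ Z)) := by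
      obtain ⟨C, hC⟩ := Metric.isBounded_iff.mp hB
      refine Metric.isBounded_iff.mpr ⟨C, ?_⟩
      rintro _ ⟨w, hw, rfl⟩ _ ⟨w', hw', rfl⟩
      rw [coprod_dist_inl_inl]; exact hC hw hw'
    have hBr : IsBounded (Sum.inr '' (Metric.closedBall z₀ r') : Set (W ⊕ Z)) := by
      refine Metric.isBounded_iff.mpr ⟨2 * r', ?_⟩
      rintro _ ⟨z, hz, rfl⟩ _ ⟨z', hz', rfl⟩
      rw [coprod_dist_inr_inr]
      rw [Metric.mem_closedBall] at hz hz'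
      have := dist_triangle z z₀ z'
      have h2 : dist z z₀ = dist z₀ z := dist_comm _ _
      rw [dist_comm] at hz hz'
      linarith
    exact (hG.2 _ (hBl.union hBr)).subset hsub
  · -- close
    refine ⟨dist w₁ w₀ + 1 + r' + 1, by positivity, fun y => ?_⟩
    rcases hgy : G y with w | z
    · simp only [Function.comp, hdef, hgy, Sum.elim_inl, id]
      rw [coprod_dist_inl_inl, dist_self]
      positivity
    · simp only [Function.comp, hdef, hgy, Sum.elim_inr]
      rw [coprod_dist_inl_inr]
      have := hmemz hgy
      linarith
theorem right_recon {Y W Z : Type*} [MetricSpace Y] [MetricSpace W] [MetricSpace Z]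
    (w₀ : W) (z₀ z₁ : Z) (G : Y → W ⊕ Z)
    (hG : letI := coprodMetric w₀ z₀; IsCoarse G)
    (hbd : IsBounded {w : W | Sum.inl w ∈ Set.range G}) :
    ∃ h : Y → Z, IsCoarse h ∧ (letI := coprodMetric w₀ z₀; Close (Sum.inr ∘ h) G) := by
  letI := coprodMetric w₀ z₀
  obtain ⟨r, hr⟩ := (Metric.isBounded_iff_subset_closedBall w₀).mp hbd
  set r' := max r 0 with hr'def
  have hr'0 : 0 ≤ r' := le_max_right _ _
  set h : Y → Z := fun y => Sum.elim (fun _ => z₁) id (G y) with hdef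
  have hmemw : ∀ {y w}, G y = Sum.inl w → dist w w₀ ≤ r' := by
    intro y w hy
    have : w ∈ Metric.closedBall w₀ r := hr ⟨y, hy⟩
    rw [Metric.mem_closedBall] at this
    exact this.trans (le_max_left _ _)
  refine ⟨h, ⟨?_, ?_⟩, ?_⟩
  · -- bornologous
    intro R hR
    obtain ⟨S, hS, hS2⟩ := hG.1 R hR
    refine ⟨S + dist z₀ z₁ + 1, by positivity, fun y y' hyy => ?_⟩
    have hd := hS2 y y' hyy
    rcases hy : G y with w | z <;> rcases hy' : G y' with w' | z' <;>
      simp only [hdef, hy, hy', Sum.elim_inl, Sum.elim_inr, id]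
    · simp; positivity
    · rw [hy, hy', coprod_dist_inl_inr] at hd
      have h1 := dist_triangle z₁ z₀ z'
      have h2 : dist z₁ z₀ = dist z₀ z₁ := dist_comm _ _
      have h4 := dist_nonneg (x := w) (y := w₀)
      linarith
    · rw [hy, hy', coprod_dist_inr_inl] at hd
      have h1 := dist_triangle z z₀ z₁
      have h2 : dist z z₀ = dist z₀ z := dist_comm _ _
      have h4 := dist_nonneg (x := w') (y := w₀)
      linarith
    · rw [hy, hy', coprod_dist_inr_inr] at hd
      have := dist_nonneg (x := z₀) (y := z₁); linarith
  · -- proper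
    intro B hB
    have hsub : h ⁻¹' B ⊆ G ⁻¹' (Sum.inr '' B ∪ Sum.inl '' (Metric.closedBall w₀ r')) := by
      intro y hy
      rcases hgy : G y with w | z
      · right
        exact ⟨w, by rw [Metric.mem_closedBall]; exact hmemw hgy, hgy.symm⟩
      · left
        refine ⟨z, ?_, hgy.symm⟩
        simpa [hdef, hgy] using hy
    have hBl : IsBounded (Sum.inr '' B : Set (W ⊕ Z)) := by
      obtain ⟨C, hC⟩ := Metric.isBounded_iff.mp hB
      refine Metric.isBounded_iff.mpr ⟨C, ?_⟩
      rintro _ ⟨z, hz, rfl⟩ _ ⟨z', hz', rfl⟩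
      rw [coprod_dist_inr_inr]; exact hC hz hz'
    have hBr : IsBounded (Sum.inl '' (Metric.closedBall w₀ r') : Set (W ⊕ Z)) := by
      refine Metric.isBounded_iff.mpr ⟨2 * r', ?_⟩
      rintro _ ⟨w, hw, rfl⟩ _ ⟨w', hw', rfl⟩
      rw [coprod_dist_inl_inl]
      rw [Metric.mem_closedBall] at hw hw'
      have := dist_triangle w w₀ w'
      rw [dist_comm] at hw'
      linarith
    exact (hG.2 _ (hBl.union hBr)).subset hsub
  · -- close
    refine ⟨r' + 1 + dist z₀ z₁ + 1, by positivity, fun y => ?_⟩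
    rcases hgy : G y with w | z
    · simp only [Function.comp, hdef, hgy, Sum.elim_inl]
      rw [coprod_dist_inr_inl]
      have := hmemw hgy
      linarith
    · simp only [Function.comp, hdef, hgy, Sum.elim_inr, id]
      rw [coprod_dist_inr_inr, dist_self]
      positivity
def CoarsePt {X : Type u} (p : X → Prop) : Type u := Subtype p
def CoarsePt.mk {X : Type u} {p : X → Prop} (x : X) (h : p x) : CoarsePt p := ⟨x, h⟩
def CoarsePt.val {X : Type u} {p : X → Prop} (a : CoarsePt p) : X := Subtype.val a
@[simp] theorem CoarsePt.val_mk {X : Type u} {p : X → Prop} (x : X) (h : p x) :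
    (CoarsePt.mk x h).val = x := rfl

theorem dichotomy {X : Type u} {W Z : Type*} [MetricSpace X] [MetricSpace W] [MetricSpace Z]
    (hX : CondC X) (w₀ : W) (z₀ : Z) (F : X → W ⊕ Z)
    (hF : letI := coprodMetric w₀ z₀; IsCoarse F)
    (x₁ x₂ : X) (w₁ : W) (z₁ : Z) (hx₁ : F x₁ = Sum.inl w₁) (hx₂ : F x₂ = Sum.inr z₁) :
    IsBounded {w : W | Sum.inl w ∈ Set.range F} ∨ IsBounded {z : Z | Sum.inr z ∈ Set.range F} := by
  classical
  letI := coprodMetric w₀ z₀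
  set pW : W ⊕ Z → W := Sum.elim id (fun _ => w₁) with hpW
  set pZ : W ⊕ Z → Z := Sum.elim (fun _ => z₁) id with hpZ
  set A := CoarsePt (fun x : X => ∃ w, F x = Sum.inl w) with hA
  set B := CoarsePt (fun x : X => ∃ z, F x = Sum.inr z) with hB
  letI mA : MetricSpace A := pullMetric (fun a : A => pW (F a.val))
  letI mB : MetricSpace B := pullMetric (fun b : B => pZ (F b.val))
  set a₀ : A := CoarsePt.mk x₁ ⟨w₁, hx₁⟩ with ha₀
  set b₀ : B := CoarsePt.mk x₂ ⟨z₁, hx₂⟩ with hb₀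
  have hBalt : ∀ x : X, ¬(∃ w, F x = Sum.inl w) → ∃ z, F x = Sum.inr z := by
    intro x h
    rcases hFx : F x with w | z
    · exact absurd ⟨w, hFx⟩ h
    · exact ⟨z, rfl⟩
  set Φ : X → A ⊕ B := fun x =>
    if h : ∃ w, F x = Sum.inl w then Sum.inl (CoarsePt.mk x h) else Sum.inr (CoarsePt.mk x (hBalt x h)) with hΦ
  have hΦl : ∀ x (h : ∃ w, F x = Sum.inl w), Φ x = Sum.inl (CoarsePt.mk x h) := by
    intro x h; simp only [hΦ, dif_pos h]
  have hΦr : ∀ x (h : ∃ z, F x = Sum.inr z), Φ x = Sum.inr (CoarsePt.mk x h) := by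
    intro x h
    have hn : ¬ ∃ w, F x = Sum.inl w := by
      rintro ⟨w, hw⟩; obtain ⟨z, hz⟩ := h; rw [hw] at hz; exact Sum.inl_ne_inr hz
    simp only [hΦ, dif_neg hn]
  -- distance facts in A and B
  have hdA_le : ∀ a a' : A, dist a a' ≤ dist (pW (F a.val)) (pW (F a'.val)) + 1 :=
    fun a a' => pullMetric_dist_le (fun a : A => pW (F a.val)) a a'
  have hdA_ge : ∀ a a' : A, dist (pW (F a.val)) (pW (F a'.val)) ≤ dist a a' :=
    fun a a' => pullMetric_le_dist (fun a : A => pW (F a.val)) a a'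
  have hdB_le : ∀ b b' : B, dist b b' ≤ dist (pZ (F b.val)) (pZ (F b'.val)) + 1 :=
    fun b b' => pullMetric_dist_le (fun b : B => pZ (F b.val)) b b'
  have hdB_ge : ∀ b b' : B, dist (pZ (F b.val)) (pZ (F b'.val)) ≤ dist b b' :=
    fun b b' => pullMetric_le_dist (fun b : B => pZ (F b.val)) b b'
  letI mAB : MetricSpace (A ⊕ B) := coprodMetric a₀ b₀
  have hΦcoarse : IsCoarse Φ := by
    constructor
    · -- bornologous
      intro R hR
      obtain ⟨S, hS, hS2⟩ := hF.1 R hR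
      refine ⟨2 * S + dist w₀ w₁ + dist z₀ z₁ + 4, by positivity, fun x x' hxx => ?_⟩
      have hd := hS2 x x' hxx
      have hd' : dist (F x') (F x) ≤ S := by rw [dist_comm]; exact hd
      by_cases h1 : ∃ w, F x = Sum.inl w <;> by_cases h2 : ∃ w, F x' = Sum.inl w
      · rw [hΦl x h1, hΦl x' h2, coprod_dist_inl_inl]
        refine (hdA_le _ _).trans ?_
        obtain ⟨w, hw⟩ := h1; obtain ⟨w', hw'⟩ := h2
        rw [hw, hw', coprod_dist_inl_inl] at hd
        simp only [hw, hw', hpW, Sum.elim_inl, id, CoarsePt.val_mk]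
        have := dist_nonneg (x := w₀) (y := w₁)
        have := dist_nonneg (x := z₀) (y := z₁)
        linarith
      · -- x in A, x' in B
        obtain ⟨z', hz'⟩ := hBalt x' h2
        rw [hΦl x h1, hΦr x' ⟨z', hz'⟩, coprod_dist_inl_inr]
        obtain ⟨w, hw⟩ := h1
        rw [hw, hz', coprod_dist_inl_inr] at hd
        have e1 : dist (CoarsePt.mk x ⟨w, hw⟩ : A) a₀ ≤ dist w w₁ + 1 := by
          have := hdA_le (CoarsePt.mk x ⟨w, hw⟩) a₀
          simpa [ha₀, hw, hx₁, hpW] using this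
        have e2 : dist b₀ (CoarsePt.mk x' ⟨z', hz'⟩ : B) ≤ dist z₁ z' + 1 := by
          have := hdB_le b₀ (CoarsePt.mk x' ⟨z', hz'⟩)
          simpa [hb₀, hz', hx₂, hpZ] using this
        have t1 := dist_triangle w w₀ w₁
        have t2 := dist_triangle z₁ z₀ z'
        have c1 : dist z₁ z₀ = dist z₀ z₁ := dist_comm _ _
        have h4 := dist_nonneg (x := z₀) (y := z')
        have h5 := dist_nonneg (x := w) (y := w₀)
        linarith
      · -- x in B, x' in A
        obtain ⟨z, hz⟩ := hBalt x h1
        obtain ⟨w', hw'⟩ := h2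
        rw [hΦr x ⟨z, hz⟩, hΦl x' ⟨w', hw'⟩, coprod_dist_inr_inl]
        rw [hz, hw', coprod_dist_inr_inl] at hd
        have e1 : dist (CoarsePt.mk x' ⟨w', hw'⟩ : A) a₀ ≤ dist w' w₁ + 1 := by
          have := hdA_le (CoarsePt.mk x' ⟨w', hw'⟩) a₀
          simpa [ha₀, hw', hx₁, hpW] using this
        have e2 : dist b₀ (CoarsePt.mk x ⟨z, hz⟩ : B) ≤ dist z₁ z + 1 := by
          have := hdB_le b₀ (CoarsePt.mk x ⟨z, hz⟩)
          simpa [hb₀, hz, hx₂, hpZ] using this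
        have t1 := dist_triangle w' w₀ w₁
        have t2 := dist_triangle z₁ z₀ z
        have c1 : dist z₁ z₀ = dist z₀ z₁ := dist_comm _ _
        have h4 := dist_nonneg (x := z₀) (y := z)
        have h5 := dist_nonneg (x := w') (y := w₀)
        linarith
      · -- both in B
        obtain ⟨z, hz⟩ := hBalt x h1
        obtain ⟨z', hz'⟩ := hBalt x' h2
        rw [hΦr x ⟨z, hz⟩, hΦr x' ⟨z', hz'⟩, coprod_dist_inr_inr]
        refine (hdB_le _ _).trans ?_
        rw [hz, hz', coprod_dist_inr_inr] at hd
        simp only [hz, hz', hpZ, Sum.elim_inr, id, CoarsePt.val_mk]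
        have := dist_nonneg (x := w₀) (y := w₁)
        have := dist_nonneg (x := z₀) (y := z₁)
        linarith
    · -- proper
      intro Bs hBs
      obtain ⟨r, hr⟩ := (Metric.isBounded_iff_subset_closedBall (Sum.inl a₀ : A ⊕ B)).mp hBs
      set r' := max r 0 with hr'def
      have hr'0 : 0 ≤ r' := le_max_right _ _
      have hsub : Φ ⁻¹' Bs ⊆
          F ⁻¹' (Metric.closedBall (Sum.inl w₁ : W ⊕ Z) r' ∪
                 Metric.closedBall (Sum.inr z₁ : W ⊕ Z) r') := by
        intro x hx
        have hx' : dist (Φ x) (Sum.inl a₀) ≤ r := Metric.mem_closedBall.mp (hr hx)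
        by_cases h1 : ∃ w, F x = Sum.inl w
        · obtain ⟨w, hw⟩ := h1
          left
          rw [hΦl x ⟨w, hw⟩, coprod_dist_inl_inl] at hx'
          have hge := hdA_ge (CoarsePt.mk x ⟨w, hw⟩) a₀
          simp only [ha₀, CoarsePt.val_mk, hpW, hw, hx₁, Sum.elim_inl, id_eq] at hge
          rw [Metric.mem_closedBall, hw, coprod_dist_inl_inl]
          exact (hge.trans hx').trans (le_max_left _ _)
        · obtain ⟨z, hz⟩ := hBalt x h1
          right
          rw [hΦr x ⟨z, hz⟩, coprod_dist_inr_inl] at hx'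
          have hge := hdB_ge b₀ (CoarsePt.mk x ⟨z, hz⟩)
          simp only [hb₀, CoarsePt.val_mk, hpZ, hz, hx₂, Sum.elim_inr, id_eq] at hge
          rw [Metric.mem_closedBall, hz, coprod_dist_inr_inr, dist_comm]
          have hda : (0:ℝ) ≤ dist a₀ a₀ := dist_nonneg
          have : dist z₁ z ≤ r := by linarith [hge, hx']
          exact this.trans (le_max_left _ _)
      refine (hF.2 _ ?_).subset hsub
      exact (Metric.isBounded_closedBall).union (Metric.isBounded_closedBall)
  rcases hX A B a₀ b₀ Φ hΦcoarse with ⟨g', _, R, hR, hclose⟩ | ⟨h', _, R, hR, hclose⟩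
  · -- inl side close: right part of range F is bounded
    right
    refine (Metric.isBounded_iff_subset_closedBall z₁).mpr ⟨R, ?_⟩
    rintro z ⟨x, hx⟩
    have hz : F x = Sum.inr z := hx
    have hc := hclose x
    rw [Function.comp, hΦr x ⟨z, hz⟩, coprod_dist_inl_inr] at hc
    have hge := hdB_ge b₀ (CoarsePt.mk x ⟨z, hz⟩)
    simp only [hb₀, CoarsePt.val_mk, hpZ, hz, hx₂, Sum.elim_inr, id_eq] at hge
    have hda : (0:ℝ) ≤ dist (g' x) a₀ := dist_nonneg
    rw [Metric.mem_closedBall, dist_comm]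
    linarith
  · -- inr side close: left part of range F is bounded
    left
    refine (Metric.isBounded_iff_subset_closedBall w₁).mpr ⟨R, ?_⟩
    rintro w ⟨x, hx⟩
    have hw : F x = Sum.inl w := hx
    have hc := hclose x
    rw [Function.comp, hΦl x ⟨w, hw⟩, coprod_dist_inr_inl] at hc
    have hge := hdA_ge (CoarsePt.mk x ⟨w, hw⟩) a₀
    simp only [ha₀, CoarsePt.val_mk, hpW, hw, hx₁, Sum.elim_inl, id_eq] at hge
    have hdb : (0:ℝ) ≤ dist b₀ (h' x) := dist_nonneg
    rw [Metric.mem_closedBall]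
    linarith
/-- condition (C) is preserved by surjective coarse maps. -/
theorem condC_of_surjective_coarse_map {X : Type u} {Y : Type v} [MetricSpace X] [MetricSpace Y]
    (f : X → Y) (hf : IsCoarse f) (hsurj : Function.Surjective f) (hX : CondC X) :
    CondC Y := by
  intro W Z instW instZ w₀ z₀ G hG
  letI := coprodMetric w₀ z₀
  by_cases hY : Nonempty Y
  · obtain ⟨y0⟩ := hY
    by_cases hL : ∃ y w, G y = Sum.inl w
    · obtain ⟨yL, w₁, hyL⟩ := hL
      by_cases hRr : ∃ y z, G y = Sum.inr z
      · -- both sides hit: use dichotomy on G ∘ f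
        obtain ⟨yR, z₁, hyR⟩ := hRr
        obtain ⟨xL, hxL⟩ := hsurj yL
        obtain ⟨xR, hxR⟩ := hsurj yR
        have hGf : IsCoarse (G ∘ f) := isCoarse_comp hf hG
        have hrange : Set.range (G ∘ f) = Set.range G := hsurj.range_comp G
        rcases dichotomy hX w₀ z₀ (G ∘ f) hGf xL xR w₁ z₁
            (by simp only [Function.comp, hxL]; exact hyL)
            (by simp only [Function.comp, hxR]; exact hyR) with hb | hb
        · rw [hrange] at hb
          right
          exact right_recon w₀ z₀ z₁ G hG hb
        · rw [hrange] at hb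
          left
          exact left_recon w₀ w₁ z₀ G hG hb
      · -- nothing maps to the right: right part of range is empty
        left
        refine left_recon w₀ w₁ z₀ G hG ?_
        have he : {z : Z | Sum.inr z ∈ Set.range G} = ∅ :=
          Set.eq_empty_iff_forall_notMem.mpr (by rintro z ⟨y, hy⟩; exact hRr ⟨y, z, hy⟩)
        rw [he]; exact isBounded_empty
    · -- nothing maps to the left
      right
      have hz₁ : ∃ z, G y0 = Sum.inr z := by
        rcases hy : G y0 with w | z
        · exact absurd ⟨y0, w, hy⟩ hL
        · exact ⟨z, rfl⟩
      obtain ⟨z₁, _⟩ := hz₁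
      refine right_recon w₀ z₀ z₁ G hG ?_
      have he : {w : W | Sum.inl w ∈ Set.range G} = ∅ :=
        Set.eq_empty_iff_forall_notMem.mpr (by rintro w ⟨y, hy⟩; exact hL ⟨y, w, hy⟩)
      rw [he]; exact isBounded_empty
  · -- Y is empty
    left
    haveI : IsEmpty Y := not_nonempty_iff.mp hY
    refine ⟨fun y => isEmptyElim y, ⟨?_, ?_⟩, ?_⟩
    · exact fun R hR => ⟨1, one_pos, fun y => isEmptyElim y⟩
    · intro B _
      have he : ((fun y : Y => isEmptyElim y) ⁻¹' B) = ∅ := Set.eq_empty_of_isEmpty _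
      rw [he]; exact isBounded_empty
    · exact ⟨1, one_pos, fun y => isEmptyElim y⟩
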